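/- For each pair of integers k ≥ m ≥ 1 there is a constant C_{k,m} > 0 such that for any interval I of length ℓ(I) and any C^{k-1,1} function f on I, one has max_{z∈I} |f^{(m)}(z)| ≤ C_{k,m} [ ℓ(I)^{-m} M + M^{1-m/k} (max_{t∈I} |f^{(k)}(t)|)^{m/k} ], where M = max_{t₁,t₂∈I} |f(t₁) - f(t₂) - (t₁-t₂)f'(t₂) - ... - ((t₁-t₂)^{m-1}/(m-1)!) f^{(m-1)}(t₂)| is the maximal (m-1)-st order Taylor remainder over pairs of points in I. -/

import Mathlib

open Set

lemma onestep {a b : ℝ} {u : ℝ → ℝ}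
    (hu : DifferentiableOn ℝ u (Set.Icc a b)) {A B : ℝ}
    (hA : ∀ t ∈ Set.Icc a b, |u t| ≤ A)
    (hB : ∀ x ∈ Set.Icc a b, ∀ y ∈ Set.Icc a b,
      |derivWithin u (Set.Icc a b) x - derivWithin u (Set.Icc a b) y| ≤ B * |x - y|)
    {z : ℝ} (hz : z ∈ Set.Icc a b) {h : ℝ} (hh : 0 < h) (hhb : 2 * h ≤ b - a) :
    |derivWithin u (Set.Icc a b) z| ≤ 2 * A / h + B * h := by
  set s := Set.Icc a b with hs
  set d := derivWithin u s z with hd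
  obtain ⟨σ, hσ, hw⟩ : ∃ σ : ℝ, (σ = 1 ∨ σ = -1) ∧ z + σ * h ∈ s := by
    rcases le_or_gt (z + h) b with hc | hc
    · exact ⟨1, Or.inl rfl, ⟨by nlinarith [hz.1], by nlinarith⟩⟩
    · exact ⟨-1, Or.inr rfl, ⟨by nlinarith [hz.2], by nlinarith [hz.2]⟩⟩
  set w := z + σ * h with hwdef
  have hσabs : |σ * h| = h := by
    rcases hσ with rfl | rfl
    · simp [abs_of_nonneg hh.le]
    · rw [neg_one_mul, abs_neg, abs_of_nonneg hh.le]
  have hsub : Set.uIcc z w ⊆ s := Set.uIcc_subset_Icc hz hw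
  have hdist : ∀ x ∈ Set.uIcc z w, |x - z| ≤ h := by
    intro x hx
    rw [Set.mem_uIcc] at hx
    rcases hσ with rfl | rfl <;> rcases hx with ⟨h1, h2⟩ | ⟨h1, h2⟩ <;>
      rw [abs_le] <;> constructor <;> nlinarith
  have hB0 : 0 ≤ B := by
    by_contra hB0
    have h1 := hB a (Set.left_mem_Icc.2 (by nlinarith)) b (Set.right_mem_Icc.2 (by nlinarith))
    have h2 : (0:ℝ) < |a - b| := by rw [abs_sub_comm, abs_of_pos (by nlinarith)]; nlinarith
    nlinarith [abs_nonneg (derivWithin u s a - derivWithin u s b)]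
  have key := Convex.norm_image_sub_le_of_norm_hasDerivWithin_le
      (f := fun t => u t - t * d) (f' := fun x => derivWithin u s x - d)
      (s := Set.uIcc z w) (C := B * h) ?_ ?_ (convex_uIcc z w)
      (Set.left_mem_uIcc) (Set.right_mem_uIcc)
  · skip
    have hwz : ‖w - z‖ = h := by rw [hwdef, add_sub_cancel_left]; exact hσabs
    rw [hwz] at key
    have expand : (u w - w * d) - (u z - z * d) = u w - u z - (σ * h) * d := by
      rw [hwdef]; ring
    rw [expand] at key
    have habs : ‖u w - u z - σ * h * d‖ = |u w - u z - σ * h * d| := rfl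
    have h1 : h * |d| ≤ B * h * h + 2 * A := by
      have e1 : |σ * h * d| = h * |d| := by rw [abs_mul, hσabs]
      have e2 : |σ * h * d| ≤ |u w - u z - σ * h * d| + |u w| + |u z| := by
        have := abs_add_le (u w - u z - σ * h * d) (σ * h * d)
        have e3 : u w - u z - σ * h * d + σ * h * d = u w - u z := by ring
        rw [e3] at this
        have := abs_sub (u w) (u z)
        calc |σ * h * d| = |(u w - u z) - (u w - u z - σ * h * d)| := by ring_nf
          _ ≤ |u w - u z| + |u w - u z - σ * h * d| := abs_sub (u w - u z) _
          _ ≤ (|u w| + |u z|) + |u w - u z - σ * h * d| := by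
              have := abs_sub (u w) (u z); linarith
          _ = |u w - u z - σ * h * d| + |u w| + |u z| := by ring
      have := hA w hw
      have := hA z hz
      rw [habs] at key
      linarith [e1 ▸ e2]
    calc |d| ≤ (B * h * h + 2 * A) / h := by rw [le_div_iff₀ hh]; linarith
      _ = 2 * A / h + B * h := by field_simp; ring
  · intro x hx
    exact (((hu x (hsub hx)).hasDerivWithinAt.mono hsub)).sub
      ((hasDerivAt_mul_const d).hasDerivWithinAt)
  · intro x hx
    calc ‖derivWithin u s x - d‖ ≤ B * |x - z| := hB x (hsub hx) z hz
      _ ≤ B * h := mul_le_mul_of_nonneg_left (hdist x hx) hB0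

lemma chain (n : ℕ) : ∃ C : ℝ, 1 ≤ C ∧ ∀ a b : ℝ, a < b → ∀ u : ℝ → ℝ,
    ContDiffOn ℝ (n : ℕ∞) u (Set.Icc a b) →
    ∀ A B : ℝ, 0 ≤ A → 0 ≤ B →
    (∀ t ∈ Set.Icc a b, |u t| ≤ A) →
    (∀ x ∈ Set.Icc a b, ∀ y ∈ Set.Icc a b,
      |iteratedDerivWithin n u (Set.Icc a b) x - iteratedDerivWithin n u (Set.Icc a b) y|
        ≤ B * |x - y|) →
    ∀ i ≤ n, ∀ h : ℝ, 0 < h → C * h ≤ b - a → ∀ z ∈ Set.Icc a b,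
      |iteratedDerivWithin i u (Set.Icc a b) z| ≤ C * (A / h ^ i + B * h ^ (n + 1 - i)) := by
  induction n with
  | zero =>
    refine ⟨1, le_rfl, ?_⟩
    intro a b hab u hu A B hA0 hB0 hA hB i hi h hh hhb z hz
    interval_cases i
    rw [iteratedDerivWithin_zero]
    have h1 := hA z hz
    have h2 : 0 ≤ B * h ^ (0 + 1 - 0) := by positivity
    have e : (1:ℝ) * (A / h ^ 0 + B * h ^ (0 + 1 - 0)) = A + B * h ^ (0 + 1 - 0) := by
      rw [pow_zero, div_one, one_mul]
    rw [e]
    linarith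
  | succ n ih =>
    obtain ⟨C, hC1, hC⟩ := ih
    refine ⟨8 * C^2 + 2 * C, by nlinarith, ?_⟩
    intro a b hab u hu A B hA0 hB0 hA hB i hi h hh hhb z hz
    set s := Set.Icc a b with hsdef
    have ud : UniqueDiffOn ℝ s := uniqueDiffOn_Icc hab
    have hC0 : (0:ℝ) < C := lt_of_lt_of_le one_pos hC1
    have hCh : C * h ≤ b - a := by nlinarith
    have h8Ch : 2 * (4 * C * h) ≤ b - a := by nlinarith
    -- differentiability of n-th derivative
    have hdiffn : DifferentiableOn ℝ (iteratedDerivWithin n u s) s :=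
      hu.differentiableOn_iteratedDerivWithin (by exact_mod_cast Nat.lt_succ_self n) ud
    -- the (n+1)-st derivative as derivWithin of the n-th
    have hsucc : ∀ x ∈ s, iteratedDerivWithin (n+1) u s x
        = derivWithin (iteratedDerivWithin n u s) s x := fun x hx => by
      rw [iteratedDerivWithin_succ]
    -- max of (n+1)-st derivative
    have hcont : ContinuousOn (fun t => |iteratedDerivWithin (n+1) u s t|) s :=
      (hu.continuousOn_iteratedDerivWithin (by exact_mod_cast le_rfl) ud).abs
    obtain ⟨x₀, hx₀, hmax⟩ := (isCompact_Icc).exists_isMaxOn (Set.nonempty_Icc.2 hab.le) hcont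
    set S := |iteratedDerivWithin (n+1) u s x₀| with hSdef
    have hS0 : 0 ≤ S := abs_nonneg _
    have hSb : ∀ y ∈ s, |iteratedDerivWithin (n+1) u s y| ≤ S := fun y hy => hmax hy
    -- n-th derivative is S-Lipschitz
    have hlipn : ∀ x ∈ s, ∀ y ∈ s,
        |iteratedDerivWithin n u s x - iteratedDerivWithin n u s y| ≤ S * |x - y| := by
      intro x hx y hy
      have := Convex.norm_image_sub_le_of_norm_hasDerivWithin_le
        (f := iteratedDerivWithin n u s) (f' := iteratedDerivWithin (n+1) u s)
        (s := s) (C := S)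
        (fun t ht => (hsucc t ht) ▸ (hdiffn t ht).hasDerivWithinAt)
        (fun t ht => hSb t ht) (convex_Icc a b) hy hx
      simpa [Real.norm_eq_abs] using this
    -- IH applied with top Lipschitz constant S
    have IH := hC a b hab u (hu.of_le (by exact_mod_cast Nat.le_succ n)) A S hA0 hS0 hA hlipn
    -- bound for the n-th derivative
    have bound_n : ∀ t ∈ s, |iteratedDerivWithin n u s t| ≤ C * (A / h ^ n + S * h) := by
      intro t ht
      simpa using IH n le_rfl h hh hCh t ht
    -- lipschitz hypothesis for derivWithin of n-th derivative
    have hB' : ∀ x ∈ s, ∀ y ∈ s,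
        |derivWithin (iteratedDerivWithin n u s) s x
          - derivWithin (iteratedDerivWithin n u s) s y| ≤ B * |x - y| := by
      intro x hx y hy
      rw [← hsucc x hx, ← hsucc y hy]; exact hB x hx y hy
    -- one-step bound for the (n+1)-st derivative with step 4Ch
    have step : ∀ t ∈ s, |iteratedDerivWithin (n+1) u s t|
        ≤ 2 * (C * (A / h ^ n + S * h)) / (4 * C * h) + B * (4 * C * h) := by
      intro t ht
      rw [hsucc t ht]
      exact onestep hdiffn bound_n hB' ht (by positivity) h8Ch
    have halg : 2 * (C * (A / h ^ n + S * h)) / (4 * C * h)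
        = A / (2 * h ^ (n+1)) + S / 2 := by
      rw [pow_succ]
      field_simp
      ring
    have hS : S ≤ A / h ^ (n+1) + 8 * C * B * h := by
      have := step x₀ hx₀
      rw [halg] at this
      have e : A / h ^ (n+1) = 2 * (A / (2 * h ^ (n+1))) := by field_simp
      rw [e]
      linarith [this]
    -- pointwise bound for the (n+1)-st derivative
    have top : ∀ t ∈ s, |iteratedDerivWithin (n+1) u s t| ≤ A / h ^ (n+1) + 8 * C * B * h :=
      fun t ht => le_trans (hSb t ht) hS
    rcases Nat.lt_or_ge i (n+1) with hi' | hi'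
    · -- i ≤ n
      have hin : i ≤ n := Nat.lt_succ_iff.mp hi'
      have IHi := IH i hin h hh hCh z hz
      have hpow : (A / h ^ (n+1)) * h ^ (n + 1 - i) = A / h ^ i := by
        have e := pow_add h i (n+1-i)
        rw [show i + (n+1-i) = n+1 by omega] at e
        rw [e]; field_simp
      have hpow2 : h * h ^ (n + 1 - i) = h ^ (n + 1 + 1 - i) := by
        rw [show n+1+1-i = (n+1-i)+1 by omega, pow_succ']
    -- combine
      have hSmul : S * h ^ (n + 1 - i) ≤ A / h ^ i + 8 * C * B * h ^ (n + 1 + 1 - i) := by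
        have := mul_le_mul_of_nonneg_right hS (le_of_lt (pow_pos hh (n + 1 - i)))
        rw [add_mul, hpow] at this
        calc S * h ^ (n + 1 - i) ≤ A / h ^ i + 8 * C * B * h * h ^ (n + 1 - i) := by
              linarith [this]
          _ = A / h ^ i + 8 * C * B * h ^ (n + 1 + 1 - i) := by rw [mul_assoc, hpow2]
      have h1 : 0 ≤ A / h ^ i := by positivity
      have h2 : 0 ≤ B * h ^ (n + 1 + 1 - i) := by positivity
      calc |iteratedDerivWithin i u s z| ≤ C * (A / h ^ i + S * h ^ (n + 1 - i)) := IHi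
        _ ≤ C * (A / h ^ i + (A / h ^ i + 8 * C * B * h ^ (n + 1 + 1 - i))) := by
            have := mul_le_mul_of_nonneg_left (add_le_add_left hSmul (A / h ^ i)) hC0.le
            linarith [this]
        _ ≤ (8 * C^2 + 2 * C) * (A / h ^ i + B * h ^ (n + 1 + 1 - i)) := by nlinarith
    · -- i = n + 1
      have hieq : i = n + 1 := le_antisymm hi hi'
      subst hieq
      have := top z hz
      have h1 : 0 ≤ A / h ^ (n+1) := by positivity
      have h2 : 0 ≤ B * h := by positivity
      have e : n + 1 + 1 - (n+1) = 1 := by omega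
      rw [e, pow_one]
      nlinarith

lemma polyHasDeriv (c : ℕ → ℝ) (a : ℝ) (m i : ℕ) (t : ℝ) :
    HasDerivAt (fun x => ∑ j ∈ Finset.range m, c j * (j.descFactorial i : ℝ) * (x - a) ^ (j - i))
      (∑ j ∈ Finset.range m, c j * (j.descFactorial (i+1) : ℝ) * (t - a) ^ (j - (i+1))) t := by
  apply HasDerivAt.fun_sum
  intro j hj
  have h1 : HasDerivAt (fun x : ℝ => (x - a) ^ (j - i))
      ((↑(j - i) : ℝ) * (t - a) ^ (j - i - 1) * 1) t :=
    ((hasDerivAt_id t).sub_const a).pow _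
  have h2 := h1.const_mul (c j * (j.descFactorial i : ℝ))
  refine h2.congr_deriv ?_
  rw [show j - (i+1) = j - i - 1 by omega, Nat.descFactorial_succ]
  push_cast
  ring

lemma identity {a b : ℝ} (hab : a < b) {f : ℝ → ℝ} {n : ℕ}
    (hf : ContDiffOn ℝ (n : ℕ∞) f (Set.Icc a b)) (c : ℕ → ℝ) (m : ℕ) :
    ∀ i ≤ n, ∀ t ∈ Set.Icc a b,
      iteratedDerivWithin i (fun x => f x - ∑ j ∈ Finset.range m, c j * (x - a) ^ j)
          (Set.Icc a b) t
        = iteratedDerivWithin i f (Set.Icc a b) t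
          - ∑ j ∈ Finset.range m, c j * (j.descFactorial i : ℝ) * (t - a) ^ (j - i) := by
  have ud : UniqueDiffOn ℝ (Set.Icc a b) := uniqueDiffOn_Icc hab
  intro i
  induction i with
  | zero =>
    intro _ t ht
    simp [iteratedDerivWithin_zero]
  | succ i ih =>
    intro hin t ht
    have hi : i ≤ n := le_of_lt (Nat.lt_of_succ_le hin)
    rw [iteratedDerivWithin_succ]
    rw [derivWithin_congr (fun x hx => ih hi x hx) (ih hi t ht)]
    have hF : DifferentiableWithinAt ℝ (iteratedDerivWithin i f (Set.Icc a b)) (Set.Icc a b) t :=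
      (hf.differentiableOn_iteratedDerivWithin
        (by exact_mod_cast Nat.lt_of_succ_le hin) ud) t ht
    have hcomb := (hF.hasDerivWithinAt).sub ((polyHasDeriv c a m i t).hasDerivWithinAt)
    erw [hcomb.derivWithin (ud t ht)]
    rw [← iteratedDerivWithin_succ]

lemma lipDeriv {a b : ℝ} (hab : a < b) {u : ℝ → ℝ} {K : ℝ} (hK : 0 ≤ K)
    (hl : ∀ x ∈ Set.Icc a b, ∀ y ∈ Set.Icc a b, |u x - u y| ≤ K * |x - y|)
    {z : ℝ} (hz : z ∈ Set.Icc a b) :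
    |derivWithin u (Set.Icc a b) z| ≤ K := by
  set s := Set.Icc a b with hsdef
  by_cases hd : DifferentiableWithinAt ℝ u s z
  · have h1 := hd.hasDerivWithinAt
    rw [hasDerivWithinAt_iff_tendsto_slope] at h1
    have hcl : z ∈ closure (s \ {z}) := by
      rcases lt_or_ge z b with hzb | hzb
      · have hsub : Set.Ioc z b ⊆ s \ {z} := by
          intro y hy
          exact ⟨⟨le_trans hz.1 hy.1.le, hy.2⟩, fun hyz => by simp only [Set.mem_singleton_iff] at hyz; exact absurd (hyz ▸ hy.1) (lt_irrefl z)⟩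
        have : z ∈ closure (Set.Ioc z b) := by
          rw [closure_Ioc (ne_of_lt hzb)]
          exact ⟨le_refl z, hzb.le⟩
        exact closure_mono hsub this
      · have haz : a < z := lt_of_lt_of_le hab hzb
        have hsub : Set.Ico a z ⊆ s \ {z} := by
          intro y hy
          exact ⟨⟨hy.1, le_trans hy.2.le hz.2⟩, fun hyz => by simp only [Set.mem_singleton_iff] at hyz; exact absurd (hyz ▸ hy.2) (lt_irrefl z)⟩
        have : z ∈ closure (Set.Ico a z) := by
          rw [closure_Ico (ne_of_lt haz)]
          exact ⟨haz.le, le_refl z⟩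
        exact closure_mono hsub this
    haveI : (nhdsWithin z (s \ {z})).NeBot := mem_closure_iff_nhdsWithin_neBot.mp hcl
    have h2 : Filter.Tendsto (fun y => |slope u z y|) (nhdsWithin z (s \ {z}))
        (nhds |derivWithin u s z|) := h1.abs
    apply le_of_tendsto h2
    filter_upwards [self_mem_nhdsWithin] with y hy
    have hyz : y ≠ z := fun hyz => hy.2 (by simp [hyz])
    rw [slope_def_field]
    rw [abs_div]
    rw [div_le_iff₀ (abs_pos.mpr (sub_ne_zero.mpr hyz))]
    calc |u y - u z| ≤ K * |y - z| := hl y hy.1 z hz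
      _ = K * |y - z| := rfl
  · rw [derivWithin_zero_of_not_differentiableWithinAt hd]
    simpa using hK

/-- One-dimensional Landau–Kolmogorov type interpolation with Taylor remainder data:
for `k ≥ m ≥ 1` there is a constant `C > 0` so that for every interval `[a,b]` and
every `C^{k-1,1}` function `f` on `[a,b]` (i.e. `f` is `C^{k-1}` with `f^{(k-1)}`
`K`-Lipschitz on `[a,b]`), if the `(m-1)`-st order Taylor remainders over pairs of
points of `[a,b]` are bounded by `M`, then
`|f^{(m)}(z)| ≤ C (M/(b-a)^m + M^{1-m/k} K^{m/k})` for all `z ∈ [a,b]`. -/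
theorem deriv_interpolation_taylor_remainder (k m : ℕ) (hm : 1 ≤ m) (hmk : m ≤ k) :
    ∃ C : ℝ, 0 < C ∧ ∀ (a b : ℝ), a < b → ∀ f : ℝ → ℝ,
      ContDiffOn ℝ (↑(k - 1) : ℕ∞) f (Set.Icc a b) →
      ∀ M K : ℝ, 0 ≤ M → 0 ≤ K →
      LipschitzOnWith (Real.toNNReal K)
        (iteratedDerivWithin (k - 1) f (Set.Icc a b)) (Set.Icc a b) →
      (∀ t₁ ∈ Set.Icc a b, ∀ t₂ ∈ Set.Icc a b,
        |f t₁ - ∑ j ∈ Finset.range m,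
            (t₁ - t₂) ^ j / (Nat.factorial j : ℝ) *
              iteratedDerivWithin j f (Set.Icc a b) t₂| ≤ M) →
      ∀ z ∈ Set.Icc a b,
        |iteratedDerivWithin m f (Set.Icc a b) z| ≤
          C * (M / (b - a) ^ m +
            M ^ (1 - (m : ℝ) / k) * K ^ ((m : ℝ) / k)) := by
  obtain ⟨C, hC1, hC⟩ := chain (k - 1)
  have hC0 : (0:ℝ) < C := lt_of_lt_of_le one_pos hC1
  refine ⟨2 * C ^ (k + 2), by positivity, ?_⟩
  intro a b hab f hf M K hM0 hK0 hlip htay z hz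
  have ud : UniqueDiffOn ℝ (Set.Icc a b) := uniqueDiffOn_Icc hab
  have hk1 : 1 ≤ k := le_trans hm hmk
  have hL0 : (0:ℝ) < b - a := sub_pos.mpr hab
  have hkR : (0:ℝ) < (k:ℝ) := by exact_mod_cast hk1
  have hCpows : (1:ℝ) ≤ C ^ (k + 2) := by
    have := pow_le_pow_left₀ (le_of_lt one_pos) hC1 (k + 2)
    rwa [one_pow] at this
  have hrpow1 : (0:ℝ) ≤ M ^ (1 - (m:ℝ)/k) * K ^ ((m:ℝ)/k) := by positivity
  have hfirst : (0:ℝ) ≤ M / (b-a) ^ m := by positivity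
  -- Lipschitz in elementwise form
  have hlip' : ∀ x ∈ Set.Icc a b, ∀ y ∈ Set.Icc a b,
      |iteratedDerivWithin (k-1) f (Set.Icc a b) x
        - iteratedDerivWithin (k-1) f (Set.Icc a b) y| ≤ K * |x - y| := by
    intro x hx y hy
    have h1 := hlip.dist_le_mul x hx y hy
    rwa [Real.dist_eq, Real.dist_eq, Real.coe_toNNReal K hK0] at h1
  by_cases hmkeq : m = k
  · -- top order case : use the Lipschitz bound directly
    subst hmkeq
    have e1 : (m:ℝ)/m = 1 := div_self (ne_of_gt hkR)
    rw [e1, show (1:ℝ) - 1 = 0 by norm_num, Real.rpow_zero, Real.rpow_one, one_mul]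
    have hder : iteratedDerivWithin m f (Set.Icc a b) z
        = derivWithin (iteratedDerivWithin (m-1) f (Set.Icc a b)) (Set.Icc a b) z := by
      conv_lhs => rw [show m = (m-1)+1 by omega]
      rw [iteratedDerivWithin_succ]
    rw [hder]
    have hlb := lipDeriv hab hK0 hlip' hz
    nlinarith [mul_nonneg (le_of_lt hC0) hfirst]
  · -- m < k
    have hmlt : m < k := lt_of_le_of_ne hmk hmkeq
    have hmn : m ≤ k - 1 := by omega
    have ha : a ∈ Set.Icc a b := Set.left_mem_Icc.mpr hab.le
    set c : ℕ → ℝ := fun j => iteratedDerivWithin j f (Set.Icc a b) a / (Nat.factorial j : ℝ)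
      with hcdef
    set g : ℝ → ℝ := fun x => f x - ∑ j ∈ Finset.range m, c j * (x - a)^j with hgdef
    have hgA : ∀ t ∈ Set.Icc a b, |g t| ≤ M := by
      intro t ht
      have e : (∑ j ∈ Finset.range m, c j * (t - a)^j)
          = ∑ j ∈ Finset.range m, (t-a)^j / (Nat.factorial j : ℝ)
              * iteratedDerivWithin j f (Set.Icc a b) a := by
        apply Finset.sum_congr rfl
        intro j hj
        rw [hcdef]
        ring
      show |f t - ∑ j ∈ Finset.range m, c j * (t - a)^j| ≤ M
      rw [e]
      exact htay t ht a ha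
    have hpoly : ContDiff ℝ (↑(k-1):ℕ∞) (fun x : ℝ => ∑ j ∈ Finset.range m, c j * (x - a)^j) :=
      ContDiff.sum fun j hj => contDiff_const.mul ((contDiff_id.sub contDiff_const).pow j)
    have hgC : ContDiffOn ℝ (↑(k-1):ℕ∞) g (Set.Icc a b) := hf.sub hpoly.contDiffOn
    have hid := identity hab (n := k-1) hf c m
    have hgB : ∀ x ∈ Set.Icc a b, ∀ y ∈ Set.Icc a b,
        |iteratedDerivWithin (k-1) g (Set.Icc a b) x
          - iteratedDerivWithin (k-1) g (Set.Icc a b) y| ≤ K * |x - y| := by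
      intro x hx y hy
      rw [hid (k-1) le_rfl x hx, hid (k-1) le_rfl y hy]
      have eQ : ∀ t : ℝ,
          (∑ j ∈ Finset.range m, c j * (j.descFactorial (k-1) : ℝ) * (t - a)^(j - (k-1)))
            = ∑ j ∈ Finset.range m, c j * (j.descFactorial (k-1) : ℝ) := by
        intro t
        apply Finset.sum_congr rfl
        intro j hj
        rw [Finset.mem_range] at hj
        rw [show j - (k-1) = 0 by omega, pow_zero, mul_one]
      rw [eQ x, eQ y]
      have e2 : iteratedDerivWithin (k-1) f (Set.Icc a b) x
            - (∑ j ∈ Finset.range m, c j * (j.descFactorial (k-1) : ℝ))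
            - (iteratedDerivWithin (k-1) f (Set.Icc a b) y
              - (∑ j ∈ Finset.range m, c j * (j.descFactorial (k-1) : ℝ)))
          = iteratedDerivWithin (k-1) f (Set.Icc a b) x
            - iteratedDerivWithin (k-1) f (Set.Icc a b) y := by ring
      rw [e2]
      exact hlip' x hx y hy
    have hchain := hC a b hab g hgC M K hM0 hK0 hgA hgB
    have hgm : iteratedDerivWithin m g (Set.Icc a b) z
        = iteratedDerivWithin m f (Set.Icc a b) z := by
      rw [hid m hmn z hz]
      have e3 : (∑ j ∈ Finset.range m, c j * (j.descFactorial m : ℝ) * (z - a)^(j-m)) = 0 := by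
        apply Finset.sum_eq_zero
        intro j hj
        rw [Finset.mem_range] at hj
        rw [Nat.descFactorial_eq_zero_iff_lt.mpr hj]
        simp
      rw [e3, sub_zero]
    have Hb : ∀ h : ℝ, 0 < h → C * h ≤ b - a →
        |iteratedDerivWithin m f (Set.Icc a b) z| ≤ C * (M / h^m + K * h^(k-m)) := by
      intro h hh hhL
      have h4 := hchain m hmn h hh hhL z hz
      rw [hgm, show k - 1 + 1 - m = k - m by omega] at h4
      exact h4
    set h₀ := (b - a) / C with hh0def
    have hh00 : (0:ℝ) < h₀ := by positivity
    have hCh₀ : C * h₀ = b - a := by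
      rw [hh0def]
      field_simp
    rcases eq_or_lt_of_le hM0 with hM | hM
    · -- M = 0
      have hM' : M = 0 := hM.symm
      have key : |iteratedDerivWithin m f (Set.Icc a b) z| ≤ 0 := by
        by_contra hpos
        push_neg at hpos
        set x := |iteratedDerivWithin m f (Set.Icc a b) z| with hxdef
        set h : ℝ := min h₀ (min 1 (x / (2*C*(K+1)))) with hhdef
        have hh : 0 < h := by
          apply lt_min hh00
          apply lt_min one_pos
          positivity
        have hh1 : h ≤ 1 := le_trans (min_le_right _ _) (min_le_left _ _)
        have hhx : h ≤ x / (2*C*(K+1)) := le_trans (min_le_right _ _) (min_le_right _ _)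
        have hhh0 : h ≤ h₀ := min_le_left _ _
        have hb := Hb h hh (by
          calc C * h ≤ C * h₀ := mul_le_mul_of_nonneg_left hhh0 hC0.le
            _ = b - a := hCh₀)
        rw [hM'] at hb
        have e5 : h^(k-m) ≤ h := by
          have := pow_le_pow_of_le_one hh.le hh1 (show 1 ≤ k - m by omega)
          rwa [pow_one] at this
        have e6 : C * (0 / h^m + K * h^(k-m)) ≤ C * K * h := by
          rw [zero_div, zero_add, ← mul_assoc]
          exact mul_le_mul_of_nonneg_left e5 (by positivity)
        have e7 : C * K * h ≤ x / 2 := by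
          calc C * K * h ≤ C * K * (x / (2*C*(K+1))) := by
                apply mul_le_mul_of_nonneg_left hhx (by positivity)
            _ ≤ x / 2 := by
                have hxe : C * K * (x / (2*C*(K+1))) = K * x / (2*(K+1)) := by
                  field_simp
                rw [hxe, div_le_div_iff₀ (by positivity) (by norm_num)]
                nlinarith
        linarith
      have hRHS : (0:ℝ) ≤ 2 * C ^ (k+2) * (M / (b-a)^m + M ^ (1-(m:ℝ)/k) * K ^ ((m:ℝ)/k)) := by
        positivity
      linarith
    · rcases eq_or_lt_of_le hK0 with hK | hK
      · -- K = 0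
        have hK' : K = 0 := hK.symm
        have hb := Hb h₀ hh00 hCh₀.le
        rw [hK', zero_mul, add_zero] at hb
        have e8 : M / h₀^m = C^m * M / (b-a)^m := by
          rw [hh0def, div_pow]
          rw [div_div_eq_mul_div]
          field_simp
        rw [e8] at hb
        have hKr : K ^ ((m:ℝ)/k) = 0 := by
          rw [hK']
          exact Real.zero_rpow (by positivity)
        rw [hKr, mul_zero, add_zero]
        have e9 : C * (C^m * M / (b-a)^m) ≤ 2 * C^(k+2) * (M / (b-a)^m) := by
          have e9a : C * C^m ≤ 2 * C^(k+2) := by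
            have := pow_le_pow_right₀ hC1 (show m + 1 ≤ k + 2 by omega)
            rw [pow_succ'] at this
            nlinarith
          calc C * (C^m * M / (b-a)^m) = (C * C^m) * (M / (b-a)^m) := by ring
            _ ≤ 2 * C^(k+2) * (M / (b-a)^m) := mul_le_mul_of_nonneg_right e9a hfirst
        calc |iteratedDerivWithin m f (Set.Icc a b) z| ≤ C * (C^m * M / (b-a)^m) := hb
          _ ≤ 2 * C^(k+2) * (M / (b-a)^m) := e9
      · -- M > 0, K > 0
        set r : ℝ := (m:ℝ)/(k:ℝ) with hrdef
        have hMK0 : 0 < M / K := div_pos hM hK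
        set θ := (M/K) ^ ((1:ℝ)/(k:ℝ)) with hθdef
        have hθ0 : 0 < θ := Real.rpow_pos_of_pos hMK0 _
        have hθk : θ ^ (k:ℕ) = M / K := by
          rw [hθdef, ← Real.rpow_natCast ((M/K) ^ ((1:ℝ)/(k:ℝ))) k, ← Real.rpow_mul hMK0.le]
          rw [show (1:ℝ)/(k:ℝ) * ((k:ℕ):ℝ) = 1 by field_simp]
          exact Real.rpow_one _
        rcases le_total h₀ θ with hcase | hcase
        · have hb := Hb h₀ hh00 hCh₀.le
          have e1 : h₀^m * h₀^(k-m) = h₀^(k:ℕ) := by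
            rw [← pow_add, show m + (k-m) = k by omega]
          have e2 : K * h₀^(k:ℕ) ≤ M := by
            have h5 := pow_le_pow_left₀ hh00.le hcase k
            rw [hθk] at h5
            calc K * h₀^(k:ℕ) ≤ K * (M/K) := mul_le_mul_of_nonneg_left h5 hK0
              _ = M := by field_simp
          have e3 : K * h₀^(k-m) ≤ M / h₀^m := by
            rw [le_div_iff₀ (pow_pos hh00 m)]
            calc K * h₀^(k-m) * h₀^m = K * (h₀^m * h₀^(k-m)) := by ring
              _ = K * h₀^(k:ℕ) := by rw [e1]
              _ ≤ M := e2
          have e4 : M / h₀^m = C^m * (M / (b-a)^m) := by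
            rw [hh0def, div_pow, div_div_eq_mul_div]
            field_simp
          have e5 : C * (M/h₀^m + K * h₀^(k-m)) ≤ C * (2 * (M/h₀^m)) :=
            mul_le_mul_of_nonneg_left (by linarith) hC0.le
          have e6a : C * C^m ≤ C^(k+2) := by
            have := pow_le_pow_right₀ hC1 (show m+1 ≤ k+2 by omega)
            rw [pow_succ'] at this
            linarith
          have e6b : (C*C^m) * (M/(b-a)^m) ≤ C^(k+2) * (M/(b-a)^m) :=
            mul_le_mul_of_nonneg_right e6a hfirst
          have e6 : C * (2 * (M/h₀^m)) ≤ 2 * C^(k+2) * (M/(b-a)^m) := by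
            rw [e4]
            calc C * (2*(C^m*(M/(b-a)^m))) = 2*((C*C^m)*(M/(b-a)^m)) := by ring
              _ ≤ 2*(C^(k+2)*(M/(b-a)^m)) := by linarith
              _ = 2*C^(k+2)*(M/(b-a)^m) := by ring
          calc |iteratedDerivWithin m f (Set.Icc a b) z|
              ≤ C * (M/h₀^m + K * h₀^(k-m)) := hb
            _ ≤ C * (2*(M/h₀^m)) := e5
            _ ≤ 2 * C^(k+2) * (M/(b-a)^m) := e6
            _ ≤ 2 * C^(k+2) * (M/(b-a)^m + M^(1-r)*K^r) := by
                have h9 := mul_le_mul_of_nonneg_left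
                  (by linarith : M/(b-a)^m ≤ M/(b-a)^m + M^(1-r)*K^r)
                  (by positivity : (0:ℝ) ≤ 2*C^(k+2))
                linarith
        · have hb := Hb θ hθ0 (by
            calc C * θ ≤ C * h₀ := mul_le_mul_of_nonneg_left hcase hC0.le
              _ = b - a := hCh₀)
          have hMr0 : (0:ℝ) < M ^ r := Real.rpow_pos_of_pos hM _
          have hKr0 : (0:ℝ) < K ^ r := Real.rpow_pos_of_pos hK _
          have hθm : θ^(m:ℕ) = M^r / K^r := by
            rw [hθdef, ← Real.rpow_natCast ((M/K) ^ ((1:ℝ)/(k:ℝ))) m, ← Real.rpow_mul hMK0.le]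
            rw [show (1:ℝ)/(k:ℝ) * ((m:ℕ):ℝ) = r by rw [hrdef]; ring]
            exact Real.div_rpow hM0 hK0 r
          have hθkm : θ^(k-m:ℕ) = M^(1-r) / K^(1-r) := by
            rw [hθdef, ← Real.rpow_natCast ((M/K) ^ ((1:ℝ)/(k:ℝ))) (k-m),
              ← Real.rpow_mul hMK0.le]
            rw [show ((k-m:ℕ):ℝ) = (k:ℝ) - (m:ℝ) from Nat.cast_sub hmk]
            rw [show (1:ℝ)/(k:ℝ) * ((k:ℝ) - (m:ℝ)) = 1 - r from by
              rw [hrdef]; field_simp]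
            exact Real.div_rpow hM0 hK0 _
          have hMsplit : M^(1-r) * M^r = M := by
            rw [← Real.rpow_add hM]; norm_num
          have hKsplit : K^(1-r) * K^r = K := by
            rw [← Real.rpow_add hK]; norm_num
          have e5 : M / θ^(m:ℕ) = M^(1-r) * K^r := by
            rw [hθm, div_div_eq_mul_div, div_eq_iff (ne_of_gt hMr0)]
            calc M * K^r = (M^(1-r) * M^r) * K^r := by rw [hMsplit]
              _ = M^(1-r) * K^r * M^r := by ring
          have e6 : K * θ^(k-m:ℕ) = M^(1-r) * K^r := by
            rw [hθkm, mul_comm, div_mul_eq_mul_div,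
              div_eq_iff (ne_of_gt (Real.rpow_pos_of_pos hK (1-r)))]
            calc M^(1-r) * K = M^(1-r) * (K^(1-r) * K^r) := by rw [hKsplit]
              _ = M^(1-r) * K^r * K^(1-r) := by ring
          rw [e5, e6] at hb
          have hCC : C ≤ C^(k+2) := by
            have := pow_le_pow_right₀ hC1 (show 1 ≤ k+2 by omega)
            rwa [pow_one] at this
          calc |iteratedDerivWithin m f (Set.Icc a b) z|
              ≤ C * (M^(1-r)*K^r + M^(1-r)*K^r) := hb
            _ = 2*C*(M^(1-r)*K^r) := by ring
            _ ≤ 2*C^(k+2)*(M^(1-r)*K^r) := by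
                have h9 := mul_le_mul_of_nonneg_right hCC hrpow1
                linarith
            _ ≤ 2*C^(k+2)*(M/(b-a)^m + M^(1-r)*K^r) := by
                have := mul_le_mul_of_nonneg_left
                  (by linarith : M^(1-r)*K^r ≤ M/(b-a)^m + M^(1-r)*K^r)
                  (by positivity : (0:ℝ) ≤ 2*C^(k+2))
                linarith
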